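/- For every orientation G⃗ of a generalized corona C_n ⊙ pK_1 (n ≥ 3, p ≥ 1), we have 2 ≤ χρ(G⃗) ≤ 4. -/

import Mathlib

open SimpleGraph

/-- A packing `k`-coloring of a graph: colors in `{1,…,k}`, and distinct vertices
with the same color `i` are at distance greater than `i`. -/
def IsPackingColoring {V : Type*} (G : SimpleGraph V) (k : ℕ) (c : V → ℕ) : Prop :=
  (∀ v, 1 ≤ c v ∧ c v ≤ k) ∧
  ∀ u v : V, u ≠ v → c u = c v → (c u : ℕ∞) < G.edist u v

/-- The packing chromatic number. -/
noncomputable def packingChromaticNumber {V : Type*} (G : SimpleGraph V) : ℕ :=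
  sInf {k | ∃ c, IsPackingColoring G k c}

/-- The generalized corona `G ⊙ pK₁`: add `p` pendant neighbors to each vertex. -/
def genCorona {V : Type*} (G : SimpleGraph V) (p : ℕ) : SimpleGraph (V ⊕ V × Fin p) where
  Adj x y :=
    (∃ u v, x = Sum.inl u ∧ y = Sum.inl v ∧ G.Adj u v) ∨
    (∃ u j, x = Sum.inl u ∧ y = Sum.inr (u, j)) ∨
    (∃ u j, x = Sum.inr (u, j) ∧ y = Sum.inl u)
  symm := by
    constructor
    rintro x y (⟨u, v, rfl, rfl, h⟩ | ⟨u, j, rfl, rfl⟩ | ⟨u, j, rfl, rfl⟩)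
    · exact Or.inl ⟨v, u, rfl, rfl, h.symm⟩
    · exact Or.inr (Or.inr ⟨u, j, rfl, rfl⟩)
    · exact Or.inr (Or.inl ⟨u, j, rfl, rfl⟩)
  loopless := by
    constructor
    rintro x (⟨u, v, rfl, h1, h⟩ | ⟨u, j, rfl, h1⟩ | ⟨u, j, rfl, h1⟩)
    · cases h1; exact (G.ne_of_adj h) rfl
    · exact absurd h1 (by simp)
    · exact absurd h1 (by simp)

/-- `A` is an orientation of `G`: each edge gets exactly one direction. -/
def IsOrientation {V : Type*} (G : SimpleGraph V) (A : V → V → Prop) : Prop :=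
  (∀ u v, A u v → ¬ A v u) ∧ (∀ u v, G.Adj u v ↔ (A u v ∨ A v u))

/-- Existence of a directed path of length `n` from `u` to `v`. -/
def DPath {V : Type*} (A : V → V → Prop) : ℕ → V → V → Prop
  | 0, u, v => u = v
  | (n+1), u, v => ∃ w, A u w ∧ DPath A n w v

/-- The weak directed distance: length of a shortest directed path joining `u` and `v`
in either direction. -/
noncomputable def wdist {V : Type*} (A : V → V → Prop) (u v : V) : ℕ∞ :=
  sInf {m : ℕ∞ | ∃ n : ℕ, m = n ∧ (DPath A n u v ∨ DPath A n v u)}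

/-- A packing `k`-coloring of a digraph, w.r.t. the weak directed distance. -/
def IsDPackingColoring {V : Type*} (A : V → V → Prop) (k : ℕ) (c : V → ℕ) : Prop :=
  (∀ v, 1 ≤ c v ∧ c v ≤ k) ∧
  ∀ u v : V, u ≠ v → c u = c v → (c u : ℕ∞) < wdist A u v

/-- The packing chromatic number of a digraph. -/
noncomputable def dPackingChromaticNumber {V : Type*} (A : V → V → Prop) : ℕ :=
  sInf {k | ∃ c, IsDPackingColoring A k c}

/-- A source: no incoming arcs. -/
def IsSource {V : Type*} (A : V → V → Prop) (v : V) : Prop := ∀ u, ¬ A u v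

/-- A sink: no outgoing arcs. -/
def IsSink {V : Type*} (A : V → V → Prop) (v : V) : Prop := ∀ u, ¬ A v u

namespace CoronaAux

open scoped Fin.NatCast Fin.IntCast Fin.CommRing

theorem lt_wdist {V : Type*} (A : V → V → Prop) (u v : V) (c : ℕ)
    (h : ∀ k : ℕ, k ≤ c → ¬ DPath A k u v ∧ ¬ DPath A k v u) :
    (c : ℕ∞) < wdist A u v := by
  have h1 : (c : ℕ∞) < ((c + 1 : ℕ) : ℕ∞) := by exact_mod_cast Nat.lt_succ_self c
  refine lt_of_lt_of_le h1 (le_sInf ?_)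
  rintro x ⟨k, rfl, hk⟩
  have hck : c < k := by
    by_contra hle
    push_neg at hle
    rcases hk with hk | hk
    · exact (h k hle).1 hk
    · exact (h k hle).2 hk
  exact_mod_cast hck

theorem wdist_le {V : Type*} (A : V → V → Prop) (u v : V) (k : ℕ)
    (h : DPath A k u v ∨ DPath A k v u) : wdist A u v ≤ (k : ℕ∞) :=
  sInf_le ⟨k, rfl, h⟩

theorem cycAdj (m : ℕ) (u v : Fin (m+3)) :
    (cycleGraph (m+3)).Adj u v ↔ (u = v + 1 ∨ v = u + 1) := by
  rw [cycleGraph_adj']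
  constructor
  · rintro (h | h)
    · left
      have h2 : u - v = 1 := by apply Fin.ext; rw [h]; simp [Fin.val_one]
      rw [← h2]; ring_nf
    · right
      have h2 : v - u = 1 := by apply Fin.ext; rw [h]; simp [Fin.val_one]
      rw [← h2]; ring_nf
  · rintro (rfl | rfl) <;> [left; right] <;> simp

theorem valSucc (m : ℕ) (u : Fin (m+3)) :
    ((u + 1 : Fin (m+3)).val = u.val + 1 ∧ u.val + 1 < m + 3) ∨
      ((u+1 : Fin (m+3)).val = 0 ∧ u.val = m + 2) := by
  have h := Fin.val_add_one u
  split at h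
  · right
    rename_i he
    subst he
    exact ⟨h, by simp [Fin.last]⟩
  · left; refine ⟨h, ?_⟩
    rename_i hne
    have := u.isLt
    rcases Nat.lt_or_ge (u.val + 1) (m+3) with h2 | h2
    · exact h2
    · exact absurd (by apply Fin.ext; simp [Fin.last]; omega) hne

section Main

variable {m p : ℕ}
  (A : (Fin (m+3) ⊕ Fin (m+3) × Fin p) → (Fin (m+3) ⊕ Fin (m+3) × Fin p) → Prop)
  (hA : IsOrientation (genCorona (cycleGraph (m+3)) p) A)

include hA

theorem classify {x y} (h : A x y) :
    (∃ i : Fin (m+3), (x = Sum.inl i ∧ y = Sum.inl (i+1)) ∨ (x = Sum.inl (i+1) ∧ y = Sum.inl i)) ∨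
    (∃ i k, x = Sum.inl i ∧ y = Sum.inr (i,k)) ∨
    (∃ i k, x = Sum.inr (i,k) ∧ y = Sum.inl i) := by
  have hadj : (genCorona (cycleGraph (m+3)) p).Adj x y := (hA.2 x y).mpr (Or.inl h)
  rcases hadj with ⟨u, v, rfl, rfl, huv⟩ | h2 | h3
  · rw [cycAdj] at huv
    rcases huv with rfl | rfl
    · exact Or.inl ⟨v, Or.inr ⟨rfl, rfl⟩⟩
    · exact Or.inl ⟨u, Or.inl ⟨rfl, rfl⟩⟩
  · exact Or.inr (Or.inl h2)
  · exact Or.inr (Or.inr h3)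

theorem pendArc (i : Fin (m+3)) (k : Fin p) :
    A (Sum.inl i) (Sum.inr (i,k)) ∨ A (Sum.inr (i,k)) (Sum.inl i) :=
  (hA.2 _ _).mp (Or.inr (Or.inl ⟨i, k, rfl, rfl⟩))

theorem arc_cyc {u w : Fin (m+3)} (h : A (Sum.inl u) (Sum.inl w)) :
    (w = u + 1 ∧ A (Sum.inl u) (Sum.inl (u+1))) ∨ (u = w + 1 ∧ A (Sum.inl (w+1)) (Sum.inl w)) := by
  rcases classify A hA h with ⟨i, ⟨h1, h2⟩ | ⟨h1, h2⟩⟩ | ⟨i, k, h1, h2⟩ | ⟨i, k, h1, h2⟩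
  · cases h1; cases Sum.inl.inj h2; exact Or.inl ⟨rfl, h⟩
  · cases h2
    cases Sum.inl.inj h1
    exact Or.inr ⟨rfl, h⟩
  · exact absurd h2 (by simp)
  · exact absurd h1 (by simp)

theorem arc_inl_inr {u t : Fin (m+3)} {k : Fin p} (h : A (Sum.inl u) (Sum.inr (t,k))) : u = t := by
  rcases classify A hA h with ⟨i, ⟨h1, h2⟩ | ⟨h1, h2⟩⟩ | ⟨i, k', h1, h2⟩ | ⟨i, k', h1, h2⟩
  · exact absurd h2 (by simp)
  · exact absurd h2 (by simp)
  · obtain ⟨rfl, rfl⟩ := Prod.mk.inj (Sum.inr.inj h2)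
    exact Sum.inl.inj h1
  · exact absurd h1 (by simp)

theorem arc_inr {t : Fin (m+3)} {k : Fin p} {y} (h : A (Sum.inr (t,k)) y) : y = Sum.inl t := by
  rcases classify A hA h with ⟨i, ⟨h1, h2⟩ | ⟨h1, h2⟩⟩ | ⟨i, k', h1, h2⟩ | ⟨i, k', h1, h2⟩
  · exact absurd h1 (by simp)
  · exact absurd h1 (by simp)
  · exact absurd h1 (by simp)
  · obtain ⟨rfl, rfl⟩ := Prod.mk.inj (Sum.inr.inj h1)
    exact h2

theorem arc_into_inr {t : Fin (m+3)} {k : Fin p} {x} (h : A x (Sum.inr (t,k))) : x = Sum.inl t := by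
  rcases classify A hA h with ⟨i, ⟨h1, h2⟩ | ⟨h1, h2⟩⟩ | ⟨i, k', h1, h2⟩ | ⟨i, k', h1, h2⟩
  · exact absurd h2 (by simp)
  · exact absurd h2 (by simp)
  · obtain ⟨rfl, rfl⟩ := Prod.mk.inj (Sum.inr.inj h2)
    exact h1
  · exact absurd h2 (by simp)

theorem cyc_first {q : ℕ} {u v : Fin (m+3)}
    (h : DPath A (q+1) (Sum.inl u) (Sum.inl v)) :
    ∃ z, A (Sum.inl u) (Sum.inl z) ∧ DPath A q (Sum.inl z) (Sum.inl v) := by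
  obtain ⟨w, harc, hp⟩ := h
  rcases w with z | ⟨i, k⟩
  · exact ⟨z, harc, hp⟩
  · exfalso
    cases arc_inl_inr A hA harc
    rcases q with _ | q'
    · exact absurd hp (by simp [DPath])
    · obtain ⟨w', harc', _⟩ := hp
      cases arc_inr A hA harc'
      exact hA.1 _ _ harc harc'

theorem to_pend {q : ℕ} {x} {t : Fin (m+3)} {k : Fin p}
    (h : DPath A q x (Sum.inr (t,k))) :
    (q = 0 ∧ x = Sum.inr (t,k)) ∨
      ∃ q', q = q' + 1 ∧ DPath A q' x (Sum.inl t) ∧ A (Sum.inl t) (Sum.inr (t,k)) := by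
  induction q generalizing x with
  | zero => exact Or.inl ⟨rfl, h⟩
  | succ q' ih =>
    obtain ⟨w, harc, hp⟩ := h
    rcases ih hp with ⟨rfl, rfl⟩ | ⟨q'', hq, hp', hpa⟩
    · cases arc_into_inr A hA harc
      exact Or.inr ⟨0, rfl, rfl, harc⟩
    · subst hq
      exact Or.inr ⟨q'' + 1, rfl, ⟨w, harc, hp'⟩, hpa⟩

theorem from_pend {q : ℕ} {y} {t : Fin (m+3)} {k : Fin p}
    (h : DPath A q (Sum.inr (t,k)) y) :
    (q = 0 ∧ y = Sum.inr (t,k)) ∨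
      ∃ q', q = q' + 1 ∧ A (Sum.inr (t,k)) (Sum.inl t) ∧ DPath A q' (Sum.inl t) y := by
  rcases q with _ | q'
  · exact Or.inl ⟨rfl, h.symm⟩
  · obtain ⟨w, harc, hp⟩ := h
    cases arc_inr A hA harc
    exact Or.inr ⟨q', rfl, harc, hp⟩

theorem sink_no_out {q : ℕ} {y} {t : Fin (m+3)} {k : Fin p}
    (hs : A (Sum.inl t) (Sum.inr (t,k))) (h : DPath A q (Sum.inr (t,k)) y) :
    q = 0 ∧ y = Sum.inr (t,k) := by
  rcases from_pend A hA h with h' | ⟨q', _, harc, _⟩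
  · exact h'
  · exact absurd harc (hA.1 _ _ hs)

theorem source_no_in {q : ℕ} {x} {t : Fin (m+3)} {k : Fin p}
    (hs : A (Sum.inr (t,k)) (Sum.inl t)) (h : DPath A q x (Sum.inr (t,k))) :
    q = 0 ∧ x = Sum.inr (t,k) := by
  rcases to_pend A hA h with h' | ⟨q', _, _, hpa⟩
  · exact h'
  · exact absurd hs (hA.1 _ _ hpa)

omit hA in
theorem dpath0 {x y} (h : DPath A 0 x y) : x = y := h

omit hA in
theorem dpath1 {x y} (h : DPath A 1 x y) : A x y := by
  obtain ⟨w, harc, hw⟩ := h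
  have he : w = y := hw
  exact he ▸ harc

end Main

section Assembly

variable {m p : ℕ}
  (A : (Fin (m+3) ⊕ Fin (m+3) × Fin p) → (Fin (m+3) ⊕ Fin (m+3) × Fin p) → Prop)
  (var : Fin (m+3) → ℕ)

open Classical in
noncomputable def col : (Fin (m+3) ⊕ Fin (m+3) × Fin p) → ℕ
  | Sum.inl i => if 11 ≤ var i then 1 else var i
  | Sum.inr (i, k) =>
      if var i = 11 then (if A (Sum.inl i) (Sum.inr (i,k)) then 3 else 2)
      else if var i = 12 then (if A (Sum.inl i) (Sum.inr (i,k)) then 2 else 3)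
      else if var i = 13 then (if A (Sum.inl i) (Sum.inr (i,k)) then 2 else 4)
      else 1

theorem col_inl (i : Fin (m+3)) :
    col A var (Sum.inl i) = if 11 ≤ var i then 1 else var i := rfl

variable {t : Fin (m+3)} {k : Fin p}

theorem snk11 (h : var t = 11) (hd : A (Sum.inl t) (Sum.inr (t,k))) :
    col A var (Sum.inr (t,k)) = 3 := by simp [col, h, hd]

theorem snk12 (h : var t = 12) (hd : A (Sum.inl t) (Sum.inr (t,k))) :
    col A var (Sum.inr (t,k)) = 2 := by simp [col, h, hd]

theorem snk13 (h : var t = 13) (hd : A (Sum.inl t) (Sum.inr (t,k))) :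
    col A var (Sum.inr (t,k)) = 2 := by simp [col, h, hd]

theorem src11 (h : var t = 11) (hd : ¬ A (Sum.inl t) (Sum.inr (t,k))) :
    col A var (Sum.inr (t,k)) = 2 := by simp [col, h, hd]

theorem src12 (h : var t = 12) (hd : ¬ A (Sum.inl t) (Sum.inr (t,k))) :
    col A var (Sum.inr (t,k)) = 3 := by simp [col, h, hd]

theorem src13 (h : var t = 13) (hd : ¬ A (Sum.inl t) (Sum.inr (t,k))) :
    col A var (Sum.inr (t,k)) = 4 := by simp [col, h, hd]

theorem pend_low (h : var t ≤ 4) :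
    col A var (Sum.inr (t,k)) = 1 := by
  have h1 : var t ≠ 11 := by omega
  have h2 : var t ≠ 12 := by omega
  have h3 : var t ≠ 13 := by omega
  simp [col, h1, h2, h3]

variable (hA : IsOrientation (genCorona (cycleGraph (m+3)) p) A)
  (hvals : ∀ i, var i = 2 ∨ var i = 3 ∨ var i = 4 ∨ var i = 11 ∨ var i = 12 ∨ var i = 13)
  (hG1 : ∀ u v, A (Sum.inl u) (Sum.inl v) → 11 ≤ var u → 11 ≤ var v → False)
  (hG2 : ∀ u v q, 1 ≤ q → q ≤ 2 → var u = 2 → var v = 2 → DPath A q (Sum.inl u) (Sum.inl v) → False)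
  (hG3 : ∀ u v q, 1 ≤ q → q ≤ 3 → var u = 3 → var v = 3 → DPath A q (Sum.inl u) (Sum.inl v) → False)
  (hG4 : ∀ u v q, q ≤ 4 → var u = 4 → var v = 4 → DPath A q (Sum.inl u) (Sum.inl v) → u = v)
  (hG5 : ∀ z t q, q ≤ 1 → var z = 2 → (var t = 12 ∨ var t = 13) → DPath A q (Sum.inl z) (Sum.inl t) → False)
  (hG6 : ∀ t z q, q ≤ 1 → var t = 11 → var z = 2 → DPath A q (Sum.inl t) (Sum.inl z) → False)
  (hG7 : ∀ w t q, q ≤ 2 → var w = 3 → var t = 11 → DPath A q (Sum.inl w) (Sum.inl t) → False)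
  (hG8 : ∀ t w q, q ≤ 2 → var t = 12 → var w = 3 → DPath A q (Sum.inl t) (Sum.inl w) → False)
  (hG9 : ∀ t w q, q ≤ 3 → var t = 13 → var w = 4 → DPath A q (Sum.inl t) (Sum.inl w) → False)
  (hG10 : ∀ s t q, q ≤ 1 → var s = 12 → var t = 11 → DPath A q (Sum.inl s) (Sum.inl t) → False)

include hA hvals hG1 hG2 hG3 hG4 hG5 hG6 hG7 hG8 hG9 hG10 in
theorem noshort : ∀ (kk : ℕ) x y, x ≠ y → col A var x = col A var y →
    kk ≤ col A var x → ¬ DPath A kk x y := by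
  intro k x y hne hcol hk hpath
  rcases x with u | ⟨t, kk⟩ <;> rcases y with w | ⟨s, ll⟩
  -- cycle-cycle
  · by_cases h11u : 11 ≤ var u <;> by_cases h11w : 11 ≤ var w
    · rw [col_inl, if_pos h11u] at hk
      interval_cases k
      · exact hne (dpath0 A hpath)
      · exact hG1 u w (dpath1 A hpath) h11u h11w
    · rw [col_inl, col_inl, if_pos h11u, if_neg h11w] at hcol
      rcases hvals w with hw | hw | hw | hw | hw | hw <;> omega
    · rw [col_inl, col_inl, if_neg h11u, if_pos h11w] at hcol
      rcases hvals u with hu | hu | hu | hu | hu | hu <;> omega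
    · rw [col_inl, col_inl, if_neg h11u, if_neg h11w] at hcol
      rw [col_inl, if_neg h11u] at hk
      rcases Nat.eq_zero_or_pos k with rfl | hpos
      · exact hne (dpath0 A hpath)
      rcases hvals u with hu | hu | hu | hu | hu | hu
      · exact hG2 u w k hpos (by omega) hu (by omega) hpath
      · exact hG3 u w k hpos (by omega) hu (by omega) hpath
      · exact hne (congrArg Sum.inl (hG4 u w k (by omega) hu (by omega) hpath))
      all_goals omega
  -- cycle-pendant
  · rcases pendArc A hA s ll with hdir | hdir
    · rcases to_pend A hA hpath with ⟨rfl, heq⟩ | ⟨q', rfl, hp', hpa⟩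
      · exact absurd heq (by simp)
      · rw [col_inl] at hcol hk
        rcases hvals s with hs | hs | hs | hs | hs | hs
        · rw [pend_low A var (by omega)] at hcol
          split_ifs at hcol hk with h11
          · have hq0 : q' = 0 := by omega
            subst hq0
            cases Sum.inl.inj (dpath0 A hp')
            omega
          · rcases hvals u with hu | hu | hu | hu | hu | hu <;> omega
        · rw [pend_low A var (by omega)] at hcol
          split_ifs at hcol hk with h11
          · have hq0 : q' = 0 := by omega
            subst hq0
            cases Sum.inl.inj (dpath0 A hp')
            omega
          · rcases hvals u with hu | hu | hu | hu | hu | hu <;> omega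
        · rw [pend_low A var (by omega)] at hcol
          split_ifs at hcol hk with h11
          · have hq0 : q' = 0 := by omega
            subst hq0
            cases Sum.inl.inj (dpath0 A hp')
            omega
          · rcases hvals u with hu | hu | hu | hu | hu | hu <;> omega
        · rw [snk11 A var hs hdir] at hcol
          split_ifs at hcol hk with h11
          · omega
          · exact hG7 u s q' (by omega) hcol hs hp'
        · rw [snk12 A var hs hdir] at hcol
          split_ifs at hcol hk with h11
          · omega
          · exact hG5 u s q' (by omega) hcol (Or.inl hs) hp'
        · rw [snk13 A var hs hdir] at hcol
          split_ifs at hcol hk with h11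
          · omega
          · exact hG5 u s q' (by omega) hcol (Or.inr hs) hp'
    · obtain ⟨rfl, heq⟩ := source_no_in A hA hdir hpath
      exact absurd heq (by simp)
  -- pendant-cycle
  · rcases pendArc A hA t kk with hdir | hdir
    · obtain ⟨rfl, heq⟩ := sink_no_out A hA hdir hpath
      exact absurd heq (by simp)
    · have hnd : ¬ A (Sum.inl t) (Sum.inr (t,kk)) := hA.1 _ _ hdir
      rcases from_pend A hA hpath with ⟨rfl, heq⟩ | ⟨q', rfl, _, hp'⟩
      · exact absurd heq (by simp)
      · rw [col_inl] at hcol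
        rcases hvals t with ht | ht | ht | ht | ht | ht
        · rw [pend_low A var (by omega)] at hcol hk
          split_ifs at hcol with h11
          · have hq0 : q' = 0 := by omega
            subst hq0
            cases Sum.inl.inj (dpath0 A hp')
            omega
          · rcases hvals w with hw | hw | hw | hw | hw | hw <;> omega
        · rw [pend_low A var (by omega)] at hcol hk
          split_ifs at hcol with h11
          · have hq0 : q' = 0 := by omega
            subst hq0
            cases Sum.inl.inj (dpath0 A hp')
            omega
          · rcases hvals w with hw | hw | hw | hw | hw | hw <;> omega
        · rw [pend_low A var (by omega)] at hcol hk
          split_ifs at hcol with h11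
          · have hq0 : q' = 0 := by omega
            subst hq0
            cases Sum.inl.inj (dpath0 A hp')
            omega
          · rcases hvals w with hw | hw | hw | hw | hw | hw <;> omega
        · rw [src11 A var ht hnd] at hcol hk
          split_ifs at hcol with h11
          · omega
          · exact hG6 t w q' (by omega) ht hcol.symm hp'
        · rw [src12 A var ht hnd] at hcol hk
          split_ifs at hcol with h11
          · omega
          · exact hG8 t w q' (by omega) ht hcol.symm hp'
        · rw [src13 A var ht hnd] at hcol hk
          split_ifs at hcol with h11
          · omega
          · exact hG9 t w q' (by omega) ht hcol.symm hp'
  -- pendant-pendant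
  · rcases pendArc A hA t kk with hdir | hdir
    · obtain ⟨rfl, heq⟩ := sink_no_out A hA hdir hpath
      exact hne heq.symm
    · rcases pendArc A hA s ll with hdir2 | hdir2
      · rcases from_pend A hA hpath with ⟨rfl, heq⟩ | ⟨q', rfl, _, hp'⟩
        · exact hne heq.symm
        · rcases to_pend A hA hp' with ⟨rfl, heq⟩ | ⟨q'', rfl, hp'', hpa⟩
          · exact absurd heq (by simp)
          · have hnd : ¬ A (Sum.inl t) (Sum.inr (t,kk)) := hA.1 _ _ hdir
            rcases hvals t with ht | ht | ht | ht | ht | ht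
            · rw [pend_low A var (by omega)] at hk; omega
            · rw [pend_low A var (by omega)] at hk; omega
            · rw [pend_low A var (by omega)] at hk; omega
            · -- var t = 11, source-side: col x = 2
              rw [src11 A var ht hnd] at hcol hk
              rcases hvals s with hs | hs | hs | hs | hs | hs
              · rw [pend_low A var (by omega)] at hcol; omega
              · rw [pend_low A var (by omega)] at hcol; omega
              · rw [pend_low A var (by omega)] at hcol; omega
              · rw [snk11 A var hs hdir2] at hcol; omega
              · have hq0 : q'' = 0 := by omega
                subst hq0
                cases Sum.inl.inj (dpath0 A hp'')
                omega
              · have hq0 : q'' = 0 := by omega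
                subst hq0
                cases Sum.inl.inj (dpath0 A hp'')
                omega
            · -- var t = 12, source-side: col x = 3
              rw [src12 A var ht hnd] at hcol hk
              rcases hvals s with hs | hs | hs | hs | hs | hs
              · rw [pend_low A var (by omega)] at hcol; omega
              · rw [pend_low A var (by omega)] at hcol; omega
              · rw [pend_low A var (by omega)] at hcol; omega
              · exact hG10 t s q'' (by omega) ht hs hp''
              · rw [snk12 A var hs hdir2] at hcol; omega
              · rw [snk13 A var hs hdir2] at hcol; omega
            · -- var t = 13, source-side: col x = 4
              rw [src13 A var ht hnd] at hcol hk
              rcases hvals s with hs | hs | hs | hs | hs | hs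
              · rw [pend_low A var (by omega)] at hcol; omega
              · rw [pend_low A var (by omega)] at hcol; omega
              · rw [pend_low A var (by omega)] at hcol; omega
              · rw [snk11 A var hs hdir2] at hcol; omega
              · rw [snk12 A var hs hdir2] at hcol; omega
              · rw [snk13 A var hs hdir2] at hcol; omega
      · obtain ⟨rfl, heq⟩ := source_no_in A hA hdir2 hpath
        exact hne heq

include hA hvals hG1 hG2 hG3 hG4 hG5 hG6 hG7 hG8 hG9 hG10 in
theorem assembly : ∃ c, IsDPackingColoring A 4 c := by
  refine ⟨col A var, ?_, ?_⟩
  · rintro (i | ⟨i, k⟩)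
    · rw [col_inl]
      rcases hvals i with h | h | h | h | h | h <;> split_ifs <;> omega
    · by_cases hd : A (Sum.inl i) (Sum.inr (i, k))
      · rcases hvals i with h | h | h | h | h | h
        · rw [pend_low A var (by omega)]; omega
        · rw [pend_low A var (by omega)]; omega
        · rw [pend_low A var (by omega)]; omega
        · rw [snk11 A var h hd]; omega
        · rw [snk12 A var h hd]; omega
        · rw [snk13 A var h hd]; omega
      · rcases hvals i with h | h | h | h | h | h
        · rw [pend_low A var (by omega)]; omega
        · rw [pend_low A var (by omega)]; omega
        · rw [pend_low A var (by omega)]; omega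
        · rw [src11 A var h hd]; omega
        · rw [src12 A var h hd]; omega
        · rw [src13 A var h hd]; omega
  · intro u v hne hcol
    apply lt_wdist
    intro k hk
    constructor
    · exact noshort A var hA hvals hG1 hG2 hG3 hG4 hG5 hG6 hG7 hG8 hG9 hG10 k u v hne hcol hk
    · exact noshort A var hA hvals hG1 hG2 hG3 hG4 hG5 hG6 hG7 hG8 hG9 hG10 k v u
        (Ne.symm hne) hcol.symm (hcol ▸ hk)

end Assembly



/-- The pattern for directed cycles: prefix `[4,2,11]` of length `n % 4`, then
repeating blocks `[3,12,2,11]`. -/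
def W (n : ℕ) : ℕ → ℕ := fun q =>
  if q < n % 4 then (if q = 0 then 4 else if q = 1 then 2 else 11)
  else (if (q - n % 4) % 4 = 0 then 3 else if (q - n % 4) % 4 = 1 then 12
        else if (q - n % 4) % 4 = 2 then 2 else 11)

section CaseII

variable {m p : ℕ}
  (A : (Fin (m+3) ⊕ Fin (m+3) × Fin p) → (Fin (m+3) ⊕ Fin (m+3) × Fin p) → Prop)
  (hA : IsOrientation (genCorona (cycleGraph (m+3)) p) A)

set_option maxHeartbeats 3000000 in
include hA in
theorem caseII_core
    (P : Fin (m+3) → ℕ)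
    (hPlt : ∀ u, P u < m+3)
    (hPinj : ∀ u v, P u = P v → u = v)
    (hstep : ∀ u w, A (Sum.inl u) (Sum.inl w) → (P w = P u + 1 ∨ (P u = m + 2 ∧ P w = 0))) :
    ∃ c, IsDPackingColoring A 4 c := by
  have hcyc : ∀ q u v, q ≤ 4 → DPath A q (Sum.inl u) (Sum.inl v) →
      P u + q = P v ∨ P u + q = P v + (m+3) ∨ P u + q = P v + 2*(m+3) := by
    intro q
    induction q with
    | zero =>
      intro u v _ h
      cases Sum.inl.inj (dpath0 A h)
      omega
    | succ q ih =>
      intro u v hq h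
      obtain ⟨z, harc, hp⟩ := cyc_first A hA h
      have h1 := hstep u z harc
      have h2 := ih z v (by omega) hp
      have := hPlt u; have := hPlt v; have := hPlt z
      omega
  refine assembly A (fun u => W (m+3) (P u)) hA ?_ ?_ ?_ ?_ ?_ ?_ ?_ ?_ ?_ ?_ ?_
  · intro i
    simp only [W]
    split_ifs <;> omega
  · intro u v harc h1 h2
    have hrel := hcyc 1 u v (by omega) ⟨Sum.inl v, harc, rfl⟩
    simp only [W] at h1 h2
    have := hPlt u; have := hPlt v
    split_ifs at h1 h2 <;> omega
  · intro u v q h1 h2 hu hv hp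
    have hrel := hcyc q u v (by omega) hp
    simp only [W] at hu hv
    have := hPlt u; have := hPlt v
    split_ifs at hu hv <;> omega
  · intro u v q h1 h2 hu hv hp
    have hrel := hcyc q u v (by omega) hp
    simp only [W] at hu hv
    have := hPlt u; have := hPlt v
    split_ifs at hu hv <;> omega
  · intro u v q hq hu hv hp
    apply hPinj
    simp only [W] at hu hv
    have := hPlt u; have := hPlt v
    split_ifs at hu hv <;> omega
  · intro z t q hq hz ht hp
    have hrel := hcyc q z t (by omega) hp
    simp only [W] at hz ht
    have := hPlt z; have := hPlt t
    rcases ht with ht | ht <;> split_ifs at hz ht <;> omega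
  · intro t z q hq ht hz hp
    have hrel := hcyc q t z (by omega) hp
    simp only [W] at hz ht
    have := hPlt z; have := hPlt t
    split_ifs at hz ht <;> omega
  · intro w t q hq hw ht hp
    have hrel := hcyc q w t (by omega) hp
    simp only [W] at hw ht
    have := hPlt w; have := hPlt t
    split_ifs at hw ht <;> omega
  · intro t w q hq ht hw hp
    have hrel := hcyc q t w (by omega) hp
    simp only [W] at hw ht
    have := hPlt w; have := hPlt t
    split_ifs at hw ht <;> omega
  · intro t w q hq ht hw hp
    have hrel := hcyc q t w (by omega) hp
    simp only [W] at hw ht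
    have := hPlt w; have := hPlt t
    split_ifs at hw ht <;> omega
  · intro s t q hq hs ht hp
    have hrel := hcyc q s t (by omega) hp
    simp only [W] at hs ht
    have := hPlt s; have := hPlt t
    split_ifs at hs ht <;> omega

end CaseII

section CaseI

variable {m p : ℕ}
  (A : (Fin (m+3) ⊕ Fin (m+3) × Fin p) → (Fin (m+3) ⊕ Fin (m+3) × Fin p) → Prop)

/-- Orientation of the cycle edge `i → i+1`. -/
def Rr (i : Fin (m+3)) : Prop := A (Sum.inl i) (Sum.inl (i+1))

/-- A cycle-source. -/
def srcc (i : Fin (m+3)) : Prop := Rr A i ∧ ¬ Rr A (i - 1)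

variable {i0 i1 : Fin (m+3)}

theorem exA (h0 : ¬ Rr A i0) (u : Fin (m+3)) :
    ∃ t : ℕ, ¬ Rr A (u + (t : Fin (m+3))) := by
  refine ⟨(i0 - u).val, ?_⟩
  rw [Fin.cast_val_eq_self]
  have : u + (i0 - u) = i0 := by ring
  rwa [this]

theorem exB (h1 : Rr A i1) (u : Fin (m+3)) :
    ∃ t : ℕ, Rr A (u - (t : Fin (m+3)) - 1) := by
  refine ⟨(u - 1 - i1).val, ?_⟩
  rw [Fin.cast_val_eq_self]
  have : u - (u - 1 - i1) - 1 = i1 := by ring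
  rwa [this]

open Classical in
/-- Distance to the first "sink boundary" along the out-direction. -/
noncomputable def J (h0 : ¬ Rr A i0) (h1 : Rr A i1) (u : Fin (m+3)) : ℕ :=
  if Rr A u then Nat.find (exA A h0 u) else Nat.find (exB A h1 u)

variable (hA : IsOrientation (genCorona (cycleGraph (m+3)) p) A)
  (h0 : ¬ Rr A i0) (h1 : Rr A i1)

include hA in
theorem stepI : ∀ u w, A (Sum.inl u) (Sum.inl w) → ¬ srcc A u →
    (J A h0 h1 u = J A h0 h1 w + 1 ∧ ¬ srcc A w) := by
  classical
  intro u w harc hsrc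
  rcases arc_cyc A hA harc with ⟨rfl, hfwd⟩ | ⟨rfl, hrev⟩
  · have hRu : Rr A u := hfwd
    have hnsw : ¬ srcc A (u+1) := by
      rintro ⟨_, hns⟩
      rw [add_sub_cancel_right] at hns
      exact hns hRu
    refine ⟨?_, hnsw⟩
    by_cases hRw : Rr A (u+1)
    · simp only [J, if_pos hRu, if_pos hRw]
      rw [Nat.find_eq_iff]
      constructor
      · have hcast : (u + ((Nat.find (exA A h0 (u+1)) + 1 : ℕ) : Fin (m+3))) =
            (u+1) + ((Nat.find (exA A h0 (u+1)) : ℕ) : Fin (m+3)) := by push_cast; ring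
        rw [hcast]
        exact Nat.find_spec (exA A h0 (u+1))
      · intro t ht
        rw [not_not]
        rcases t with _ | s
        · simpa using hRu
        · have hcast : (u + ((s + 1 : ℕ) : Fin (m+3))) = (u+1) + ((s : ℕ) : Fin (m+3)) := by
            push_cast; ring
          rw [hcast]
          have hmin := Nat.find_min (exA A h0 (u+1)) (show s < Nat.find (exA A h0 (u+1)) by omega)
          rwa [not_not] at hmin
    · have hJw : (if Rr A (u+1) then Nat.find (exA A h0 (u+1)) else Nat.find (exB A h1 (u+1))) = 0 := by
        rw [if_neg hRw, Nat.find_eq_zero]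
        show Rr A ((u+1) - ((0:ℕ) : Fin (m+3)) - 1)
        have hcast : ((u+1) - ((0:ℕ) : Fin (m+3)) - 1) = u := by push_cast; ring
        rwa [hcast]
      have hJu : Nat.find (exA A h0 u) = 1 := by
        rw [Nat.find_eq_iff]
        constructor
        · have hcast : (u + ((1:ℕ) : Fin (m+3))) = u + 1 := by push_cast; ring
          rw [hcast]; exact hRw
        · intro t ht
          interval_cases t
          rw [not_not]
          simpa using hRu
      simp only [J, if_pos hRu]
      omega
  · have hnRw : ¬ Rr A w := fun hRw => hA.1 _ _ hRw hrev
    have hnRu : ¬ Rr A (w+1) := by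
      intro hRu
      exact hsrc ⟨hRu, by rwa [add_sub_cancel_right]⟩
    have hnsw : ¬ srcc A w := fun hs => hnRw hs.1
    refine ⟨?_, hnsw⟩
    simp only [J, if_neg hnRu, if_neg hnRw]
    rw [Nat.find_eq_iff]
    constructor
    · have hcast : ((w+1) - ((Nat.find (exB A h1 w) + 1 : ℕ) : Fin (m+3)) - 1) =
          (w - ((Nat.find (exB A h1 w) : ℕ) : Fin (m+3)) - 1) := by push_cast; ring
      rw [hcast]
      exact Nat.find_spec (exB A h1 w)
    · intro t ht
      rcases t with _ | s
      · show ¬ Rr A ((w+1) - ((0:ℕ) : Fin (m+3)) - 1)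
        have hcast : ((w+1) - ((0:ℕ) : Fin (m+3)) - 1) = w := by push_cast; ring
        rwa [hcast]
      · have hcast : ((w+1) - ((s+1 : ℕ) : Fin (m+3)) - 1) =
            (w - ((s:ℕ) : Fin (m+3)) - 1) := by push_cast; ring
        rw [hcast]
        exact Nat.find_min (exB A h1 w) (by omega)

include hA in
theorem cycpathI : ∀ q u v, DPath A q (Sum.inl u) (Sum.inl v) → ¬ srcc A u →
    (J A h0 h1 u = J A h0 h1 v + q ∧ ¬ srcc A v) := by
  intro q
  induction q with
  | zero =>
    intro u v h hs
    cases Sum.inl.inj (dpath0 A h)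
    exact ⟨rfl, hs⟩
  | succ q ih =>
    intro u v h hs
    obtain ⟨z, harc, hp⟩ := cyc_first A hA h
    obtain ⟨he, hz⟩ := stepI A hA h0 h1 u z harc hs
    obtain ⟨he2, hv⟩ := ih z v hp hz
    exact ⟨by omega, hv⟩

include hA in
theorem path_to_src : ∀ q u v, DPath A q (Sum.inl u) (Sum.inl v) → srcc A v → q = 0 := by
  intro q
  induction q with
  | zero => intro u v _ _; rfl
  | succ q ih =>
    intro u v h hs
    exfalso
    obtain ⟨z, harc, hp⟩ := cyc_first A hA h
    have hq0 := ih z v hp hs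
    subst hq0
    cases Sum.inl.inj (dpath0 A hp)
    rcases arc_cyc A hA harc with ⟨heq, hfwd⟩ | ⟨heq, hrev⟩
    · rw [heq] at hs
      refine hs.2 ?_
      rw [add_sub_cancel_right]
      exact hfwd
    · exact hA.1 _ _ hs.1 (heq ▸ hrev)

open Classical in
noncomputable def varI (h0 : ¬ Rr A i0) (h1 : Rr A i1) (u : Fin (m+3)) : ℕ :=
  if srcc A u then 4 else
    (if J A h0 h1 u % 4 = 0 then 3 else if J A h0 h1 u % 4 = 1 then 11
     else if J A h0 h1 u % 4 = 2 then 2 else 13)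

omit hA in
theorem varI2 {u} (h : varI A h0 h1 u = 2) : ¬ srcc A u ∧ J A h0 h1 u % 4 = 2 := by
  unfold varI at h
  split_ifs at h <;> first | omega | exact ⟨by assumption, by omega⟩

omit hA in
theorem varI3 {u} (h : varI A h0 h1 u = 3) : ¬ srcc A u ∧ J A h0 h1 u % 4 = 0 := by
  unfold varI at h
  split_ifs at h <;> first | omega | exact ⟨by assumption, by omega⟩

omit hA in
theorem varI4 {u} (h : varI A h0 h1 u = 4) : srcc A u := by
  unfold varI at h
  split_ifs at h <;> first | omega | assumption

omit hA in
theorem varI11 {u} (h : varI A h0 h1 u = 11) : ¬ srcc A u ∧ J A h0 h1 u % 4 = 1 := by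
  unfold varI at h
  split_ifs at h <;> first | omega | exact ⟨by assumption, by omega⟩

omit hA in
theorem varI12 {u} (h : varI A h0 h1 u = 12) : False := by
  unfold varI at h
  split_ifs at h <;> omega

omit hA in
theorem varI13 {u} (h : varI A h0 h1 u = 13) : ¬ srcc A u ∧ J A h0 h1 u % 4 = 3 := by
  unfold varI at h
  split_ifs at h <;> first | omega | exact ⟨by assumption, by omega⟩

omit hA in
theorem varIge11 {u} (h : 11 ≤ varI A h0 h1 u) :
    ¬ srcc A u ∧ (J A h0 h1 u % 4 = 1 ∨ J A h0 h1 u % 4 = 3) := by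
  unfold varI at h
  split_ifs at h <;> first | omega | exact ⟨by assumption, by omega⟩

include hA h0 h1 in
theorem caseI_core : ∃ c, IsDPackingColoring A 4 c := by
  classical
  refine assembly A (varI A h0 h1) hA ?_ ?_ ?_ ?_ ?_ ?_ ?_ ?_ ?_ ?_ ?_
  · intro i
    unfold varI
    split_ifs <;> omega
  · intro u v harc hu hv
    obtain ⟨hsu, hju⟩ := varIge11 A h0 h1 hu
    obtain ⟨-, hjv⟩ := varIge11 A h0 h1 hv
    obtain ⟨he, -⟩ := cycpathI A hA h0 h1 1 u v ⟨Sum.inl v, harc, rfl⟩ hsu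
    omega
  · intro u v q hq1 hq2 hu hv hp
    obtain ⟨hsu, hju⟩ := varI2 A h0 h1 hu
    obtain ⟨-, hjv⟩ := varI2 A h0 h1 hv
    obtain ⟨he, -⟩ := cycpathI A hA h0 h1 q u v hp hsu
    omega
  · intro u v q hq1 hq2 hu hv hp
    obtain ⟨hsu, hju⟩ := varI3 A h0 h1 hu
    obtain ⟨-, hjv⟩ := varI3 A h0 h1 hv
    obtain ⟨he, -⟩ := cycpathI A hA h0 h1 q u v hp hsu
    omega
  · intro u v q hq hu hv hp
    have hq0 := path_to_src A hA q u v hp (varI4 A h0 h1 hv)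
    subst hq0
    exact Sum.inl.inj (dpath0 A hp)
  · intro z t q hq hz ht hp
    obtain ⟨hsz, hjz⟩ := varI2 A h0 h1 hz
    rcases ht with ht | ht
    · exact varI12 A h0 h1 ht
    · obtain ⟨-, hjt⟩ := varI13 A h0 h1 ht
      obtain ⟨he, -⟩ := cycpathI A hA h0 h1 q z t hp hsz
      omega
  · intro t z q hq ht hz hp
    obtain ⟨hst, hjt⟩ := varI11 A h0 h1 ht
    obtain ⟨-, hjz⟩ := varI2 A h0 h1 hz
    obtain ⟨he, -⟩ := cycpathI A hA h0 h1 q t z hp hst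
    omega
  · intro w t q hq hw ht hp
    obtain ⟨hsw, hjw⟩ := varI3 A h0 h1 hw
    obtain ⟨-, hjt⟩ := varI11 A h0 h1 ht
    obtain ⟨he, -⟩ := cycpathI A hA h0 h1 q w t hp hsw
    omega
  · intro t w q hq ht hw hp
    exact varI12 A h0 h1 ht
  · intro t w q hq ht hw hp
    have hq0 := path_to_src A hA q t w hp (varI4 A h0 h1 hw)
    subst hq0
    cases Sum.inl.inj (dpath0 A hp)
    obtain ⟨-, -⟩ := varI13 A h0 h1 ht
    have := varI4 A h0 h1 hw
    omega
  · intro s t q hq hs ht hp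
    exact varI12 A h0 h1 hs

end CaseI

def Pb (m : ℕ) (u : Fin (m+3)) : ℕ := if u.val = 0 then 0 else (m+3) - u.val

section Glue

variable {m p : ℕ}
  (A : (Fin (m+3) ⊕ Fin (m+3) × Fin p) → (Fin (m+3) ⊕ Fin (m+3) × Fin p) → Prop)
  (hA : IsOrientation (genCorona (cycleGraph (m+3)) p) A)

include hA in
theorem main_coloring : ∃ c, IsDPackingColoring A 4 c := by
  by_cases hall : ∀ i : Fin (m+3), A (Sum.inl i) (Sum.inl (i+1))
  · apply caseII_core A hA (fun u => u.val) (fun u => u.isLt) (fun u v h => Fin.ext h)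
    intro u w harc
    rcases arc_cyc A hA harc with ⟨rfl, _⟩ | ⟨rfl, hrev⟩
    · rcases valSucc m u with ⟨hh1, hh2⟩ | ⟨hh1, hh2⟩
      · exact Or.inl hh1
      · exact Or.inr ⟨hh2, hh1⟩
    · exact absurd (hall w) (hA.1 _ _ hrev)
  · by_cases hall2 : ∀ i : Fin (m+3), ¬ A (Sum.inl i) (Sum.inl (i+1))
    · apply caseII_core A hA (Pb m) ?_ ?_ ?_
      · intro u
        have := u.isLt
        unfold Pb
        split_ifs <;> omega
      · intro u v h
        have hu := u.isLt; have hv := v.isLt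
        apply Fin.ext
        unfold Pb at h
        split_ifs at h <;> omega
      · intro u w harc
        rcases arc_cyc A hA harc with ⟨rfl, hfwd⟩ | ⟨rfl, hrev⟩
        · exact absurd hfwd (hall2 u)
        · have hw := w.isLt
          unfold Pb
          rcases valSucc m w with ⟨hh1, hh2⟩ | ⟨hh1, hh2⟩ <;> rw [hh1] <;> split_ifs <;>
            first | (exfalso; assumption) | omega
    · push_neg at hall hall2
      obtain ⟨j0, hj0⟩ := hall
      obtain ⟨j1, hj1⟩ := hall2
      exact caseI_core A hA hj0 hj1

include hA in
theorem main_bounds :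
    2 ≤ dPackingChromaticNumber A ∧ dPackingChromaticNumber A ≤ 4 := by
  have hmain := main_coloring A hA
  constructor
  · rw [dPackingChromaticNumber]
    apply le_csInf (⟨4, hmain⟩ : {k | ∃ c, IsDPackingColoring A k c}.Nonempty)
    rintro k ⟨c, hc⟩
    by_contra hlt
    push_neg at hlt
    have h01 : (0 : Fin (m+3)) ≠ 1 := by
      intro h
      have := congrArg Fin.val h
      simp [Fin.val_one] at this
    have hadj : A (Sum.inl (0 : Fin (m+3))) (Sum.inl 1) ∨ A (Sum.inl 1) (Sum.inl (0 : Fin (m+3))) :=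
      (hA.2 _ _).mp (Or.inl ⟨0, 1, rfl, rfl, (cycAdj m 0 1).mpr (Or.inr (by rw [zero_add]))⟩)
    have hb0 := hc.1 (Sum.inl (0 : Fin (m+3)))
    have hb1 := hc.1 (Sum.inl (1 : Fin (m+3)))
    have hne : (Sum.inl (0 : Fin (m+3)) : Fin (m+3) ⊕ Fin (m+3) × Fin p) ≠ Sum.inl 1 := by
      intro h
      exact h01 (Sum.inl.inj h)
    have hlt2 := hc.2 (Sum.inl 0) (Sum.inl 1) hne (by omega)
    have hwd : wdist A (Sum.inl (0 : Fin (m+3))) (Sum.inl 1) ≤ ((1:ℕ) : ℕ∞) := by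
      apply wdist_le
      rcases hadj with h | h
      · exact Or.inl ⟨_, h, rfl⟩
      · exact Or.inr ⟨_, h, rfl⟩
    rw [show c (Sum.inl (0 : Fin (m+3))) = 1 by omega] at hlt2
    have hcon := lt_of_lt_of_le hlt2 hwd
    simp at hcon
  · rw [dPackingChromaticNumber]
    exact Nat.sInf_le hmain

end Glue

end CoronaAux

theorem dpacking_oriented_corona_cycle (n p : ℕ) (hn : 3 ≤ n) (hp : 1 ≤ p)
    (A : (Fin n ⊕ Fin n × Fin p) → (Fin n ⊕ Fin n × Fin p) → Prop)
    (hA : IsOrientation (genCorona (cycleGraph n) p) A) :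
    2 ≤ dPackingChromaticNumber A ∧ dPackingChromaticNumber A ≤ 4 := by
  obtain ⟨m, rfl⟩ : ∃ m, n = m + 3 := ⟨n - 3, by omega⟩
  exact CoronaAux.main_bounds A hA
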